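/- Let ν : ℝ³ → ℝ be a measurable function satisfying ν₀(1+|v|) ≤ ν(v) ≤ ν₁(1+|v|) for constants ν₀, ν₁ > 0, and let M(v) = (2π)^{−3/2} e^{−|v|²/2}. For j ∈ {−1, 1}, ε ∈ (0,1) and s > 0, define R(ε, s, j) = (ε/2) ∫_{ℝ³} [ν(v) v₂² M(v)] / [ν(v)² + ε²s²(v₁ + j)²] dv. Then there exist constants C₁, C₂ > 0, depending only on ν₀ and ν₁, such that whenever εs ≥ 2: C₁/s ≤ R(ε, s, j) ≤ C₂/s. -/

import Mathlib

noncomputable section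

open MeasureTheory

/-- The normalized global Maxwellian `M(v) = (2π)^{−3/2} e^{−|v|²/2}` on `ℝ³`. -/
def Mx (v : EuclideanSpace ℝ (Fin 3)) : ℝ :=
  (2 * Real.pi) ^ (-(3:ℝ)/2) * Real.exp (-‖v‖^2 / 2)

/-- The quantity `R(ε, s, j) = (ε/2) ∫ ν v₂² M / (ν² + ε²s²(v₁+j)²) dv`. -/
def Rquant (ν : EuclideanSpace ℝ (Fin 3) → ℝ) (ε s j : ℝ) : ℝ :=
  (ε/2) * ∫ v : EuclideanSpace ℝ (Fin 3),
    (ν v * (v 1)^2 * Mx v) / ((ν v)^2 + ε^2 * s^2 * (v 0 + j)^2)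

namespace Stmt9Aux

def q1 (x : ℝ) : ℝ := (1 + |x|) * x^2 * Real.exp (-x^2/2)
def q2 (x : ℝ) : ℝ := (1 + |x|) * Real.exp (-x^2/2)

lemma q1_nonneg (x : ℝ) : 0 ≤ q1 x := by unfold q1; positivity
lemma q2_nonneg (x : ℝ) : 0 ≤ q2 x := by unfold q2; positivity

lemma norm_sq_eq3 (v : EuclideanSpace ℝ (Fin 3)) :
    ‖v‖^2 = (v 0)^2 + (v 1)^2 + (v 2)^2 := by
  rw [EuclideanSpace.norm_eq, Real.sq_sqrt (by positivity)]
  simp [Fin.sum_univ_three, Real.norm_eq_abs, sq_abs]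

lemma norm_le_sum3 (v : EuclideanSpace ℝ (Fin 3)) :
    ‖v‖ ≤ |v 0| + |v 1| + |v 2| := by
  have h := norm_sq_eq3 v
  have h0 := norm_nonneg v
  nlinarith [abs_nonneg (v 0), abs_nonneg (v 1), abs_nonneg (v 2),
    sq_abs (v 0), sq_abs (v 1), sq_abs (v 2)]

lemma one_add_norm_le_prod (v : EuclideanSpace ℝ (Fin 3)) :
    1 + ‖v‖ ≤ (1 + |v 0|) * (1 + |v 1|) * (1 + |v 2|) := by
  have h := norm_le_sum3 v
  nlinarith [abs_nonneg (v 0), abs_nonneg (v 1), abs_nonneg (v 2),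
    mul_nonneg (abs_nonneg (v 0)) (abs_nonneg (v 1)),
    mul_nonneg (abs_nonneg (v 0)) (abs_nonneg (v 2)),
    mul_nonneg (abs_nonneg (v 1)) (abs_nonneg (v 2)),
    mul_nonneg (mul_nonneg (abs_nonneg (v 0)) (abs_nonneg (v 1))) (abs_nonneg (v 2))]

lemma Mx_pos (v : EuclideanSpace ℝ (Fin 3)) : 0 < Mx v := by
  unfold Mx; positivity

lemma Mx_prod (v : EuclideanSpace ℝ (Fin 3)) :
    Mx v = (2 * Real.pi) ^ (-(3:ℝ)/2) *
      (Real.exp (-(v 0)^2/2) * (Real.exp (-(v 1)^2/2) * Real.exp (-(v 2)^2/2))) := by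
  unfold Mx
  rw [norm_sq_eq3, ← Real.exp_add, ← Real.exp_add]
  congr 2
  ring

lemma one_add_abs_exp_le (t : ℝ) : (1 + |t|) * Real.exp (-t^2/2) ≤ 2 := by
  have key : 1 + |t| ≤ 2 * Real.exp (t^2/2) := by
    nlinarith [Real.add_one_le_exp (t^2/2), sq_nonneg (|t| - 1), sq_abs t]
  have h2 : (1 + |t|) * Real.exp (-t^2/2) ≤ 2 * Real.exp (t^2/2) * Real.exp (-t^2/2) :=
    mul_le_mul_of_nonneg_right key (Real.exp_pos _).le
  have h3 : t^2/2 + -t^2/2 = 0 := by ring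
  rwa [mul_assoc, ← Real.exp_add, h3, Real.exp_zero, mul_one] at h2

lemma poly_le_exp (x : ℝ) : (1 + |x|) * (1 + x^2) ≤ 32 * Real.exp (x^2/4) := by
  have h1 : 1 + x^2/8 ≤ Real.exp (x^2/8) := by linarith [Real.add_one_le_exp (x^2/8)]
  have h2 : Real.exp (x^2/4) = Real.exp (x^2/8) * Real.exp (x^2/8) := by
    rw [← Real.exp_add]; ring_nf
  have h3 : (0:ℝ) ≤ 1 + x^2/8 := by positivity
  have habs : |x| ≤ (1 + x^2)/2 := by nlinarith [sq_nonneg (|x| - 1), sq_abs x]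
  have habs3 : |x| * x^2 ≤ (x^2 + x^4)/2 := by
    nlinarith [mul_nonneg (sq_nonneg x) (sq_nonneg (|x| - 1)), sq_abs x]
  rw [h2]
  nlinarith [mul_self_le_mul_self h3 h1, sq_abs x]

lemma q_dominated (x : ℝ) :
    q1 x ≤ 32 * Real.exp (-(1/4:ℝ) * x^2) ∧ q2 x ≤ 32 * Real.exp (-(1/4:ℝ) * x^2) := by
  have hexp : Real.exp (x^2/4) * Real.exp (-x^2/2) = Real.exp (-(1/4:ℝ) * x^2) := by
    rw [← Real.exp_add]; ring_nf
  have hP := poly_le_exp x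
  constructor
  · have h : (1+|x|) * x^2 ≤ 32 * Real.exp (x^2/4) := by
      nlinarith [abs_nonneg x, sq_nonneg x]
    calc q1 x ≤ 32 * Real.exp (x^2/4) * Real.exp (-x^2/2) :=
          mul_le_mul_of_nonneg_right h (Real.exp_pos _).le
      _ = 32 * Real.exp (-(1/4:ℝ) * x^2) := by rw [mul_assoc, hexp]
  · have h : (1+|x|) ≤ 32 * Real.exp (x^2/4) := by
      nlinarith [abs_nonneg x, sq_nonneg x]
    calc q2 x ≤ 32 * Real.exp (x^2/4) * Real.exp (-x^2/2) :=
          mul_le_mul_of_nonneg_right h (Real.exp_pos _).le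
      _ = 32 * Real.exp (-(1/4:ℝ) * x^2) := by rw [mul_assoc, hexp]

lemma q1_int : Integrable q1 := by
  have hdom : Integrable (fun x : ℝ => 32 * Real.exp (-(1/4:ℝ) * x^2)) :=
    (integrable_exp_neg_mul_sq (by norm_num)).const_mul 32
  refine hdom.mono' ?_ (Filter.Eventually.of_forall fun x => ?_)
  · apply Measurable.aestronglyMeasurable
    unfold q1; fun_prop
  · rw [Real.norm_eq_abs, abs_of_nonneg (q1_nonneg x)]
    exact (q_dominated x).1

lemma q2_int : Integrable q2 := by
  have hdom : Integrable (fun x : ℝ => 32 * Real.exp (-(1/4:ℝ) * x^2)) :=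
    (integrable_exp_neg_mul_sq (by norm_num)).const_mul 32
  refine hdom.mono' ?_ (Filter.Eventually.of_forall fun x => ?_)
  · apply Measurable.aestronglyMeasurable
    unfold q2; fun_prop
  · rw [Real.norm_eq_abs, abs_of_nonneg (q2_nonneg x)]
    exact (q_dominated x).2

lemma lorentz_fun_eq {b a : ℝ} (hb : 0 < b) (ha : 0 < a) (j : ℝ) :
    (fun x : ℝ => (b^2 + a^2*(x+j)^2)⁻¹)
      = fun x => (b^2)⁻¹ * (1 + ((a/b)*(x+j))^2)⁻¹ := by
  funext x
  rw [← mul_inv]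
  congr 1
  field_simp

lemma lorentz_integrable {b a : ℝ} (hb : 0 < b) (ha : 0 < a) (j : ℝ) :
    Integrable (fun x : ℝ => (b^2 + a^2*(x+j)^2)⁻¹) := by
  rw [lorentz_fun_eq hb ha j]
  have h1 : Integrable (fun y : ℝ => (1 + ((a/b)*y)^2)⁻¹) :=
    integrable_inv_one_add_sq.comp_mul_left' (by positivity)
  exact (h1.comp_add_right j).const_mul _

lemma lorentz_integral {b a : ℝ} (hb : 0 < b) (ha : 0 < a) (j : ℝ) :
    ∫ x : ℝ, (b^2 + a^2*(x+j)^2)⁻¹ = Real.pi / (b * a) := by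
  rw [lorentz_fun_eq hb ha j, MeasureTheory.integral_const_mul]
  have h1 : ∫ x : ℝ, (1 + ((a/b)*(x+j))^2)⁻¹ = ∫ y : ℝ, (1 + ((a/b)*y)^2)⁻¹ :=
    integral_add_right_eq_self (fun y : ℝ => (1 + ((a/b)*y)^2)⁻¹) j
  have h2 : ∫ y : ℝ, (1 + ((a/b)*y)^2)⁻¹ = |(a/b)⁻¹| • ∫ y : ℝ, (1 + y^2)⁻¹ :=
    Measure.integral_comp_mul_left (fun y : ℝ => (1 + y^2)⁻¹) (a/b)
  rw [h1, h2, integral_univ_inv_one_add_sq, smul_eq_mul,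
    abs_of_pos (by positivity : (0:ℝ) < (a/b)⁻¹)]
  field_simp

def gg (ν₀ a j : ℝ) : Fin 3 → ℝ → ℝ := ![fun x => (ν₀^2 + a^2*(x+j)^2)⁻¹, q1, q2]

lemma gg_prod (ν₀ a j : ℝ) (y : Fin 3 → ℝ) :
    ∏ i, gg ν₀ a j i (y i) = (ν₀^2 + a^2*(y 0+j)^2)⁻¹ * (q1 (y 1) * q2 (y 2)) := by
  rw [Fin.prod_univ_three]
  simp [gg]
  ring

lemma gg_int {ν₀ a : ℝ} (hν₀ : 0 < ν₀) (ha : 0 < a) (j : ℝ) :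
    ∀ i, Integrable (gg ν₀ a j i) := by
  intro i
  fin_cases i
  · simpa [gg] using lorentz_integrable hν₀ ha j
  · simpa [gg] using q1_int
  · simpa [gg] using q2_int

lemma gg_prod_int {ν₀ a : ℝ} (hν₀ : 0 < ν₀) (ha : 0 < a) (j : ℝ) :
    Integrable (fun y : Fin 3 → ℝ => ∏ i, gg ν₀ a j i (y i)) :=
  Integrable.fintype_prod (gg_int hν₀ ha j)

lemma gg_prod_integral {ν₀ a : ℝ} (hν₀ : 0 < ν₀) (ha : 0 < a) (j : ℝ) :
    ∫ y : Fin 3 → ℝ, ∏ i, gg ν₀ a j i (y i)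
      = (Real.pi / (ν₀ * a)) * ((∫ x, q1 x) * (∫ x, q2 x)) := by
  rw [MeasureTheory.integral_fintype_prod_volume_eq_prod (gg ν₀ a j), Fin.prod_univ_three]
  have h0 : ∫ x, gg ν₀ a j 0 x = Real.pi / (ν₀ * a) := by
    simpa [gg] using lorentz_integral hν₀ ha j
  have h1 : (fun x => gg ν₀ a j 1 x) = q1 := by simp [gg]
  have h2 : (fun x => gg ν₀ a j 2 x) = q2 := by simp [gg]
  rw [h0, h1, h2, mul_assoc]

/-- The pointwise upper bound for the integrand. -/
lemma G_le {ν₀ ν₁ a : ℝ} (hν₀ : 0 < ν₀) (hν₁ : 0 < ν₁) (ha : 0 < a) (j : ℝ)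
    (ν : EuclideanSpace ℝ (Fin 3) → ℝ)
    (hb : ∀ v, ν₀ * (1 + ‖v‖) ≤ ν v ∧ ν v ≤ ν₁ * (1 + ‖v‖))
    (v : EuclideanSpace ℝ (Fin 3)) :
    (ν v * (v 1)^2 * Mx v) / ((ν v)^2 + a^2 * (v 0 + j)^2)
      ≤ (2 * ν₁ * (2 * Real.pi) ^ (-(3:ℝ)/2)) * ∏ i, gg ν₀ a j i (v i) := by
  have hνv : 0 < ν v := lt_of_lt_of_le (by positivity) (hb v).1
  have hν₀v : ν₀ ≤ ν v := le_trans (by nlinarith [norm_nonneg v]) (hb v).1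
  have hD0 : 0 < ν₀^2 + a^2 * (v 0 + j)^2 := by positivity
  have hDle : ν₀^2 + a^2 * (v 0 + j)^2 ≤ (ν v)^2 + a^2 * (v 0 + j)^2 := by
    nlinarith
  have hD : 0 < (ν v)^2 + a^2 * (v 0 + j)^2 := lt_of_lt_of_le hD0 hDle
  set K : ℝ := (2 * Real.pi) ^ (-(3:ℝ)/2) with hK
  have hKpos : 0 < K := by rw [hK]; positivity
  have hnum : ν v * (v 1)^2 * Mx v ≤ (2 * ν₁ * K) * (q1 (v 1) * q2 (v 2)) := by
    have h1 : ν v ≤ ν₁ * ((1 + |v 0|) * (1 + |v 1|) * (1 + |v 2|)) :=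
      le_trans (hb v).2 (mul_le_mul_of_nonneg_left (one_add_norm_le_prod v) hν₁.le)
    calc ν v * (v 1)^2 * Mx v
        ≤ (ν₁ * ((1 + |v 0|) * (1 + |v 1|) * (1 + |v 2|))) * (v 1)^2 * Mx v := by
          exact mul_le_mul_of_nonneg_right
            (mul_le_mul_of_nonneg_right h1 (sq_nonneg _)) (Mx_pos v).le
      _ = (ν₁ * K) * (((1 + |v 0|) * Real.exp (-(v 0)^2/2)) * (q1 (v 1) * q2 (v 2))) := by
          rw [Mx_prod v, ← hK]; unfold q1 q2; ring
      _ ≤ (ν₁ * K) * (2 * (q1 (v 1) * q2 (v 2))) := by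
          apply mul_le_mul_of_nonneg_left _ (by positivity)
          exact mul_le_mul_of_nonneg_right (one_add_abs_exp_le (v 0))
            (mul_nonneg (q1_nonneg _) (q2_nonneg _))
      _ = (2 * ν₁ * K) * (q1 (v 1) * q2 (v 2)) := by ring
  have hfin : (ν v * (v 1)^2 * Mx v) / ((ν v)^2 + a^2 * (v 0 + j)^2)
      ≤ ((2 * ν₁ * K) * (q1 (v 1) * q2 (v 2))) / (ν₀^2 + a^2 * (v 0 + j)^2) :=
    div_le_div₀ (mul_nonneg (by positivity) (mul_nonneg (q1_nonneg _) (q2_nonneg _))) hnum hD0 hDle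
  calc (ν v * (v 1)^2 * Mx v) / ((ν v)^2 + a^2 * (v 0 + j)^2)
      ≤ ((2 * ν₁ * K) * (q1 (v 1) * q2 (v 2))) / (ν₀^2 + a^2 * (v 0 + j)^2) := hfin
    _ = (2 * ν₁ * K) * ((ν₀^2 + a^2*(v 0+j)^2)⁻¹ * (q1 (v 1) * q2 (v 2))) := by
        rw [div_eq_mul_inv]; ring
    _ = (2 * ν₁ * K) * ∏ i, gg ν₀ a j i (v i) := by
        rw [gg_prod ν₀ a j (fun i => v i)]

end Stmt9Aux

set_option maxHeartbeats 1000000 in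
theorem stmt9 (ν₀ ν₁ : ℝ) (hν₀ : 0 < ν₀) (hν₁ : 0 < ν₁) :
    ∃ C₁ > (0:ℝ), ∃ C₂ > (0:ℝ),
      ∀ ν : EuclideanSpace ℝ (Fin 3) → ℝ, Measurable ν →
        (∀ v, ν₀ * (1 + ‖v‖) ≤ ν v ∧ ν v ≤ ν₁ * (1 + ‖v‖)) →
        ∀ j : ℝ, (j = -1 ∨ j = 1) →
        ∀ ε ∈ Set.Ioo (0:ℝ) 1, ∀ s : ℝ, 0 < s → 2 ≤ ε * s →
          C₁ / s ≤ Rquant ν ε s j ∧ Rquant ν ε s j ≤ C₂ / s := by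
  refine ⟨ν₀ * ((2 * Real.pi) ^ (-(3:ℝ)/2) * Real.exp (-(9:ℝ)/2)) / (16*ν₁^2+1) / 2,
    by positivity,
    max (2 * ν₁ * (2 * Real.pi) ^ (-(3:ℝ)/2) * (Real.pi / ν₀) *
      ((∫ x, Stmt9Aux.q1 x) * (∫ x, Stmt9Aux.q2 x)) / 2) 1,
    lt_of_lt_of_le one_pos (le_max_right _ _), ?_⟩
  intro ν hν hb j hj ε hε s hs h2a
  obtain ⟨hε0, hε1⟩ := hε
  have ha : 0 < ε * s := mul_pos hε0 hs
  set a : ℝ := ε * s with ha_def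
  set c₁ : ℝ := ν₀ * ((2 * Real.pi) ^ (-(3:ℝ)/2) * Real.exp (-(9:ℝ)/2)) / (16*ν₁^2+1)
    with hc₁_def
  set K' : ℝ := 2 * ν₁ * (2 * Real.pi) ^ (-(3:ℝ)/2) with hK'_def
  set B₁ : ℝ := ∫ x, Stmt9Aux.q1 x with hB₁_def
  set B₂ : ℝ := ∫ x, Stmt9Aux.q2 x with hB₂_def
  have hB₁0 : 0 ≤ B₁ := integral_nonneg Stmt9Aux.q1_nonneg
  have hB₂0 : 0 ≤ B₂ := integral_nonneg Stmt9Aux.q2_nonneg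
  set G : EuclideanSpace ℝ (Fin 3) → ℝ :=
    fun v => (ν v * (v 1)^2 * Mx v) / ((ν v)^2 + a^2 * (v 0 + j)^2) with hG_def
  -- rewrite Rquant in terms of G
  have hRq : Rquant ν ε s j = (ε/2) * ∫ v, G v := by
    unfold Rquant
    congr 1
    apply integral_congr_ae
    apply Filter.Eventually.of_forall
    intro v
    simp only [hG_def, ha_def, mul_pow]
  have hνpos : ∀ v, 0 < ν v := fun v => lt_of_lt_of_le (by positivity) (hb v).1
  have hG0 : ∀ v, 0 ≤ G v := by
    intro v
    apply div_nonneg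
    · exact mul_nonneg (mul_nonneg (hνpos v).le (sq_nonneg _)) (Stmt9Aux.Mx_pos v).le
    · positivity
  have hcoord : ∀ i : Fin 3, Measurable fun v : EuclideanSpace ℝ (Fin 3) => v i :=
    fun i => (measurable_pi_apply i).comp
      ((MeasurableEquiv.toLp 2 (Fin 3 → ℝ)).symm).measurable
  have hMxmeas : Measurable Mx := by
    unfold Mx
    fun_prop
  have hGmeas : Measurable G := by
    rw [hG_def]
    apply Measurable.div
    · exact (hν.mul ((hcoord 1).pow measurable_const)).mul hMxmeas
    · exact (hν.pow measurable_const).add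
        ((((hcoord 0).add_const j).pow measurable_const).const_mul (a^2))
  have hgle : ∀ v, G v ≤ K' * ∏ i, Stmt9Aux.gg ν₀ a j i (v i) :=
    fun v => Stmt9Aux.G_le hν₀ hν₁ ha j ν hb v
  have hΦpi_int : Integrable (fun y : Fin 3 → ℝ => K' * ∏ i, Stmt9Aux.gg ν₀ a j i (y i)) :=
    (Stmt9Aux.gg_prod_int hν₀ ha j).const_mul _
  have hΦ_int : Integrable (fun v : EuclideanSpace ℝ (Fin 3) =>
      K' * ∏ i, Stmt9Aux.gg ν₀ a j i (v i)) :=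
    ((EuclideanSpace.volume_preserving_symm_measurableEquiv_toLp (Fin 3)).integrable_comp_emb
      (MeasurableEquiv.measurableEmbedding _)).mpr hΦpi_int
  have hΦ_val : ∫ v : EuclideanSpace ℝ (Fin 3), K' * ∏ i, Stmt9Aux.gg ν₀ a j i (v i)
      = K' * ((Real.pi / (ν₀ * a)) * (B₁ * B₂)) := by
    have h := (EuclideanSpace.volume_preserving_symm_measurableEquiv_toLp (Fin 3)).integral_comp
      (MeasurableEquiv.measurableEmbedding _)
      (fun y : Fin 3 → ℝ => K' * ∏ i, Stmt9Aux.gg ν₀ a j i (y i))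
    rw [show (∫ v : EuclideanSpace ℝ (Fin 3), K' * ∏ i, Stmt9Aux.gg ν₀ a j i (v i))
        = ∫ y : Fin 3 → ℝ, K' * ∏ i, Stmt9Aux.gg ν₀ a j i (y i) from h,
      MeasureTheory.integral_const_mul, Stmt9Aux.gg_prod_integral hν₀ ha j]
  have hG_int : Integrable G := by
    apply hΦ_int.mono' hGmeas.aestronglyMeasurable
    apply Filter.Eventually.of_forall
    intro v
    rw [Real.norm_eq_abs, abs_of_nonneg (hG0 v)]
    exact hgle v
  -- Upper bound
  have hIle : ∫ v, G v ≤ K' * ((Real.pi / (ν₀ * a)) * (B₁ * B₂)) := by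
    rw [← hΦ_val]
    exact integral_mono_of_nonneg (Filter.Eventually.of_forall hG0) hΦ_int
      (Filter.Eventually.of_forall hgle)
  have hupper : Rquant ν ε s j ≤ (K' * (Real.pi / ν₀) * (B₁ * B₂) / 2) / s := by
    rw [hRq]
    have h1 : (ε/2) * ∫ v, G v ≤ (ε/2) * (K' * ((Real.pi / (ν₀ * a)) * (B₁ * B₂))) :=
      mul_le_mul_of_nonneg_left hIle (by positivity)
    have h2 : (ε/2) * (K' * ((Real.pi / (ν₀ * a)) * (B₁ * B₂)))
        = (K' * (Real.pi / ν₀) * (B₁ * B₂) / 2) / s := by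
      rw [ha_def]
      field_simp
    linarith
  -- Lower bound
  set S : Fin 3 → Set ℝ := ![Set.Ioc (-j) (-j + a⁻¹), Set.Ioc 1 2, Set.Ioc 0 1] with hS_def
  set B : Set (EuclideanSpace ℝ (Fin 3)) :=
    ⇑((MeasurableEquiv.toLp 2 (Fin 3 → ℝ)).symm) ⁻¹' (Set.univ.pi S) with hB_def
  have hSmeas : MeasurableSet (Set.univ.pi S) :=
    MeasurableSet.univ_pi fun i => by
      fin_cases i <;> simp [hS_def] <;> exact measurableSet_Ioc
  have hBmeas : MeasurableSet B :=
    ((MeasurableEquiv.toLp 2 (Fin 3 → ℝ)).symm).measurable hSmeas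
  have hBvol : volume B = ENNReal.ofReal a⁻¹ := by
    rw [hB_def,
      (EuclideanSpace.volume_preserving_symm_measurableEquiv_toLp (Fin 3)).measure_preimage
        hSmeas.nullMeasurableSet,
      volume_pi_pi]
    rw [Fin.prod_univ_three]
    simp only [hS_def, Matrix.cons_val_zero, Matrix.cons_val_one, Matrix.head_cons,
      Matrix.cons_val_two, Matrix.tail_cons, Real.volume_Ioc]
    rw [show (-j + a⁻¹) - (-j) = a⁻¹ by ring]
    norm_num
  have hconst : ∀ v ∈ B, c₁ ≤ G v := by
    intro v hv
    rw [hB_def, Set.mem_preimage, Set.mem_univ_pi] at hv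
    have h0 : v 0 ∈ Set.Ioc (-j) (-j + a⁻¹) := hv 0
    have h1 : v 1 ∈ Set.Ioc (1:ℝ) 2 := hv 1
    have h2 : v 2 ∈ Set.Ioc (0:ℝ) 1 := hv 2
    obtain ⟨h0l, h0r⟩ := h0
    obtain ⟨h1l, h1r⟩ := h1
    obtain ⟨h2l, h2r⟩ := h2
    have hainv : a⁻¹ ≤ 1/2 := by
      rw [show (1:ℝ)/2 = 2⁻¹ by norm_num]
      exact inv_anti₀ two_pos h2a
    have hv0 : (v 0)^2 ≤ 9/4 := by rcases hj with rfl | rfl <;> nlinarith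
    have hnsq := Stmt9Aux.norm_sq_eq3 v
    have hnv : ‖v‖ ≤ 3 := by nlinarith [norm_nonneg v]
    have hx0 : 0 < v 0 + j := by linarith
    have hx1 : a * (v 0 + j) ≤ 1 := by
      have hle : v 0 + j ≤ a⁻¹ := by linarith
      calc a * (v 0 + j) ≤ a * a⁻¹ := mul_le_mul_of_nonneg_left hle ha.le
        _ = 1 := mul_inv_cancel₀ ha.ne'
    have hνv := hνpos v
    have hν_le : ν v ≤ 4*ν₁ := le_trans (hb v).2 (by nlinarith)
    have hden_pos : 0 < (ν v)^2 + a^2 * (v 0 + j)^2 :=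
      add_pos_of_pos_of_nonneg (pow_pos hνv 2) (by positivity)
    have hden : (ν v)^2 + a^2 * (v 0 + j)^2 ≤ 16*ν₁^2 + 1 := by
      nlinarith [mul_nonneg ha.le hx0.le]
    have hMxv : (2 * Real.pi) ^ (-(3:ℝ)/2) * Real.exp (-(9:ℝ)/2) ≤ Mx v := by
      unfold Mx
      apply mul_le_mul_of_nonneg_left _ (by positivity)
      apply Real.exp_le_exp.mpr
      nlinarith [norm_nonneg v]
    have e1 : ν₀ ≤ ν v := le_trans (by nlinarith [norm_nonneg v]) (hb v).1
    have e2 : 1 ≤ (v 1)^2 := by nlinarith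
    have hnum : ν₀ * ((2 * Real.pi) ^ (-(3:ℝ)/2) * Real.exp (-(9:ℝ)/2))
        ≤ ν v * (v 1)^2 * Mx v := by
      calc ν₀ * ((2 * Real.pi) ^ (-(3:ℝ)/2) * Real.exp (-(9:ℝ)/2))
          ≤ (ν v * (v 1)^2) * ((2 * Real.pi) ^ (-(3:ℝ)/2) * Real.exp (-(9:ℝ)/2)) := by
            apply mul_le_mul_of_nonneg_right _ (by positivity)
            nlinarith
        _ ≤ (ν v * (v 1)^2) * Mx v :=
            mul_le_mul_of_nonneg_left hMxv (mul_nonneg hνv.le (sq_nonneg _))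
    calc c₁ ≤ (ν v * (v 1)^2 * Mx v) / ((ν v)^2 + a^2 * (v 0 + j)^2) := by
          rw [hc₁_def]
          exact div_le_div₀
            (mul_nonneg (mul_nonneg hνv.le (sq_nonneg _)) (Stmt9Aux.Mx_pos v).le)
            hnum hden_pos hden
      _ = G v := by rw [hG_def]
  have hμBne : volume B ≠ ⊤ := by rw [hBvol]; exact ENNReal.ofReal_ne_top
  have hsetle : c₁ * (volume B).toReal ≤ ∫ v in B, G v :=
    setIntegral_ge_of_const_le_real hBmeas hμBne hconst hG_int.integrableOn
  have htoReal : (volume B).toReal = a⁻¹ := by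
    rw [hBvol, ENNReal.toReal_ofReal (inv_nonneg.mpr ha.le)]
  have hIge : c₁ * a⁻¹ ≤ ∫ v, G v := by
    have hle2 : ∫ v in B, G v ≤ ∫ v, G v :=
      setIntegral_le_integral hG_int (Filter.Eventually.of_forall hG0)
    rw [htoReal] at hsetle
    linarith
  have hlower : (c₁ / 2) / s ≤ Rquant ν ε s j := by
    rw [hRq]
    have h1 : (ε/2) * (c₁ * a⁻¹) ≤ (ε/2) * ∫ v, G v :=
      mul_le_mul_of_nonneg_left hIge (by positivity)
    have h2 : (ε/2) * (c₁ * a⁻¹) = (c₁ / 2) / s := by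
      rw [ha_def]
      field_simp
    rw [← h2]
    exact h1
  constructor
  · exact hlower
  · refine le_trans hupper ?_
    exact (div_le_div_iff_of_pos_right hs).mpr (le_max_left _ _)

end
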